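/- Let p be a prime and let λ be a multiset of positive integers with φ_p(λ) > p − 2 and α_p(λ) > 0. Then λ is not p-carry-minimal; i.e., there exists a multiset λ' of positive integers with the same sum and the same cardinality as λ such that α_p(λ') < α_p(λ). -/

import Mathlib

open MvPolynomial

/-- The `m`-coboundary map `δ_m` on polynomials in `k` variables `x_1, …, x_k`
(indexed by `Fin k`, with `j : Fin k` standing for the variable `x_{j+1}`),
landing in polynomials in the variables `x_0, …, x_k` (indexed by `Fin (k+1)`). -/
noncomputable def delta (A : Type*) [CommRing A] (m k : ℕ)
    (f : MvPolynomial (Fin k) A) : MvPolynomial (Fin (k + 1)) A :=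
  aeval (fun j : Fin k => (X j.succ : MvPolynomial (Fin (k + 1)) A)) f
    + ∑ i ∈ Finset.Icc 1 m, (-1 : MvPolynomial (Fin (k + 1)) A) ^ i *
        aeval (fun j : Fin k =>
          if (j : ℕ) + 1 < i then (X j.castSucc : MvPolynomial (Fin (k + 1)) A)
          else if (j : ℕ) + 1 = i then X j.castSucc + X j.succ
          else X j.succ) f
    + (-1 : MvPolynomial (Fin (k + 1)) A) ^ (m + 1) *
        aeval (fun j : Fin k =>
          if (j : ℕ) + 1 ≤ m then (X j.castSucc : MvPolynomial (Fin (k + 1)) A)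
          else X j.succ) f

/-- The monomial symmetric polynomial `τ λ` associated to a multi-index
`λ : Fin k → ℕ`: the sum of `x^μ` over the distinct rearrangements `μ` of `λ`. -/
noncomputable def tau (A : Type*) [CommRing A] {k : ℕ} (lam : Fin k → ℕ) :
    MvPolynomial (Fin k) A :=
  ∑ d ∈ (Finset.univ : Finset (Equiv.Perm (Fin k))).image
      (fun σ => Finsupp.equivFunOnFinite.symm (fun i => lam (σ i))),
    monomial d (1 : A)

/-- The multiset of values of a multi-index `Fin k → ℕ`. -/
def multisetOf {k : ℕ} (lam : Fin k → ℕ) : Multiset ℕ :=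
  Multiset.map lam Finset.univ.val

/-- The exponent multiset of an exponent vector `d : Fin k →₀ ℕ`. -/
def exMult {k : ℕ} (d : Fin k →₀ ℕ) : Multiset ℕ :=
  multisetOf (⇑d)

/-- `σ_p(n)`, the sum of the digits of `n` in base `p`. -/
def sigmaDigits (p n : ℕ) : ℕ := (Nat.digits p n).sum

/-- `α_p(λ)`, the number of carries when summing the entries of `λ` in base `p`;
equivalently the `p`-adic valuation of the multinomial coefficient of `λ`. -/
def alphaCarry (p : ℕ) (s : Multiset ℕ) : ℕ :=
  padicValNat p (Nat.factorial s.sum / (s.map Nat.factorial).prod)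

/-- The splitting distance `φ_p(λ) = (Σ_i σ_p(λ_i)) − |λ|`. -/
def phiSplit (p : ℕ) (s : Multiset ℕ) : ℕ :=
  (s.map (sigmaDigits p)).sum - Multiset.card s

/-- A multiset is power-of-`p` when all its entries are powers of `p`. -/
def IsPowOf (p : ℕ) (s : Multiset ℕ) : Prop := ∀ x ∈ s, ∃ a : ℕ, x = p ^ a

/-- `λ` is `p`-carry-minimal: `α_p(λ) ≤ α_p(μ)` for every multiset `μ` of positive
integers with the same sum and the same number of entries as `λ`. -/
def IsCarryMin (p : ℕ) (s : Multiset ℕ) : Prop :=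
  ∀ t : Multiset ℕ, (∀ x ∈ t, 0 < x) → t.sum = s.sum →
    Multiset.card t = Multiset.card s → alphaCarry p s ≤ alphaCarry p t

/-- A single gathering operation: replace two entries `a`, `b` by `a + b`. -/
def Gathers (s t : Multiset ℕ) : Prop :=
  ∃ a b u, s = a ::ₘ b ::ₘ u ∧ t = (a + b) ::ₘ u

/-- `gatherSet m λ = T^m(λ)`, the set of multisets obtained from `λ` by `m`
successive gathering operations. -/
def gatherSet : ℕ → Multiset ℕ → Set (Multiset ℕ)
  | 0, s => {s}
  | m + 1, s => {t | ∃ u ∈ gatherSet m s, Gathers u t}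

/-- One step of the annihilating-set construction: split an entry `x = a + b`
(with `a, b > 0` and no base-`p` carries in `a + b`), and add `b` onto another
entry `y`. -/
def AnnStep (p : ℕ) (μ ν : Multiset ℕ) : Prop :=
  ∃ (x y a b : ℕ) (u : Multiset ℕ), μ = x ::ₘ y ::ₘ u ∧ 0 < a ∧ 0 < b ∧ a + b = x ∧
    sigmaDigits p a + sigmaDigits p b = sigmaDigits p x ∧ ν = a ::ₘ (b + y) ::ₘ u

/-- `ann_p(λ)`: the smallest set of multisets containing `λ` closed under `AnnStep`. -/
def annSet (p : ℕ) (lam : Multiset ℕ) : Set (Multiset ℕ) :=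
  {μ | Relation.ReflTransGen (AnnStep p) lam μ}

/-- The `m`-coboundary map as a linear map. -/
noncomputable def deltaLM (A : Type*) [CommRing A] (m k : ℕ) :
    MvPolynomial (Fin k) A →ₗ[A] MvPolynomial (Fin (k + 1)) A :=
  (aeval (fun j : Fin k => (X j.succ : MvPolynomial (Fin (k + 1)) A))).toLinearMap
    + ∑ i ∈ Finset.Icc 1 m, ((-1 : A) ^ i) •
        (aeval (fun j : Fin k =>
          if (j : ℕ) + 1 < i then (X j.castSucc : MvPolynomial (Fin (k + 1)) A)
          else if (j : ℕ) + 1 = i then X j.castSucc + X j.succ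
          else X j.succ)).toLinearMap
    + ((-1 : A) ^ (m + 1)) •
        (aeval (fun j : Fin k =>
          if (j : ℕ) + 1 ≤ m then (X j.castSucc : MvPolynomial (Fin (k + 1)) A)
          else X j.succ)).toLinearMap
section Aux

variable {p : ℕ}

lemma prodFactDvd (s : Multiset ℕ) : (s.map Nat.factorial).prod ∣ (s.sum).factorial := by
  induction s using Multiset.induction with
  | empty => simp
  | cons a s ih =>
    rw [Multiset.map_cons, Multiset.prod_cons, Multiset.sum_cons]
    exact dvd_trans (mul_dvd_mul_left _ ih)
      (Nat.factorial_mul_factorial_dvd_factorial_add a s.sum)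

lemma prodFactPos (s : Multiset ℕ) : 0 < (s.map Nat.factorial).prod := by
  apply Multiset.prod_pos
  intro x hx
  obtain ⟨a, _, rfl⟩ := Multiset.mem_map.mp hx
  exact Nat.factorial_pos a

lemma valProdFact [Fact p.Prime] (s : Multiset ℕ) :
    padicValNat p (s.map Nat.factorial).prod
      = (s.map fun a => padicValNat p a.factorial).sum := by
  induction s using Multiset.induction with
  | empty => simp
  | cons a s ih =>
    rw [Multiset.map_cons, Multiset.prod_cons, Multiset.map_cons, Multiset.sum_cons,
      padicValNat.mul (Nat.factorial_ne_zero a) ((prodFactPos s).ne'), ih]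

lemma legendreInt (hp : p.Prime) (m : ℕ) :
    ((p : ℤ) - 1) * padicValNat p m.factorial = (m : ℤ) - sigmaDigits p m := by
  haveI := Fact.mk hp
  have h := sub_one_mul_padicValNat_factorial (p := p) m
  have h2 : (Nat.digits p m).sum ≤ m := Nat.digit_sum_le p m
  have h1 : 1 ≤ p := hp.one_lt.le
  have := congrArg (Nat.cast : ℕ → ℤ) h
  rw [Nat.cast_mul, Nat.cast_sub h1, Nat.cast_sub h2] at this
  simpa [sigmaDigits] using this

/-- The key formula: `(p-1) * α_p(s) + σ_p(Σ s) = Σ_i σ_p(s_i)`. -/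
lemma alphaEq (hp : p.Prime) (s : Multiset ℕ) :
    (p - 1) * alphaCarry p s + sigmaDigits p s.sum = (s.map (sigmaDigits p)).sum := by
  haveI := Fact.mk hp
  set P := (s.map Nat.factorial).prod with hPdef
  have hdvd := prodFactDvd s
  have hPpos := prodFactPos s
  have hQpos : 0 < (s.sum).factorial / P :=
    Nat.div_pos (Nat.le_of_dvd (Nat.factorial_pos _) hdvd) hPpos
  have hval : padicValNat p ((s.sum).factorial)
      = padicValNat p ((s.sum).factorial / P) + padicValNat p P := by
    conv_lhs => rw [← Nat.div_mul_cancel hdvd]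
    rw [padicValNat.mul hQpos.ne' hPpos.ne']
  -- work in ℤ
  have hZ : ((p : ℤ) - 1) * alphaCarry p s + sigmaDigits p s.sum
      = ((s.map (sigmaDigits p)).sum : ℤ) := by
    have e1 : ((p : ℤ) - 1) * padicValNat p ((s.sum).factorial)
        = ((p : ℤ) - 1) * padicValNat p ((s.sum).factorial / P)
          + ((p : ℤ) - 1) * padicValNat p P := by
      rw [hval]; push_cast; ring
    have e2 : ((p : ℤ) - 1) * padicValNat p P
        = (s.sum : ℤ) - ((s.map (sigmaDigits p)).sum : ℤ) := by
      rw [hPdef, valProdFact]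
      rw [Nat.cast_multiset_sum, Multiset.map_map]
      rw [← Multiset.sum_map_mul_left]
      have : (s.map fun i => ((p : ℤ) - 1)
          * ((Nat.cast : ℕ → ℤ) ∘ fun a => padicValNat p a.factorial) i)
          = s.map fun i : ℕ => (i : ℤ) - (sigmaDigits p i : ℤ) := by
        apply Multiset.map_congr rfl
        intro x _
        exact legendreInt hp x
      rw [this, Multiset.sum_map_sub]
      have c1 : (s.map fun i : ℕ => (i : ℤ)).sum = (s.sum : ℤ) := by
        rw [Nat.cast_multiset_sum]
      have c2 : (s.map fun i : ℕ => ((sigmaDigits p i : ℤ))).sum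
          = ((s.map (sigmaDigits p)).sum : ℤ) := by
        rw [Nat.cast_multiset_sum, Multiset.map_map]
        rfl
      rw [c1, c2]
    have e3 := legendreInt hp s.sum
    have : ((p : ℤ) - 1) * (alphaCarry p s : ℤ)
        = ((p : ℤ) - 1) * padicValNat p ((s.sum).factorial / P) := rfl
    rw [this]
    omega
  have h1 : 1 ≤ p := hp.one_lt.le
  have := hZ
  rw [show ((p : ℤ) - 1) = ((p - 1 : ℕ) : ℤ) by push_cast [Nat.cast_sub h1]; ring] at this
  exact_mod_cast this

lemma sigmaSumLe (hp : p.Prime) (s : Multiset ℕ) :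
    sigmaDigits p s.sum ≤ (s.map (sigmaDigits p)).sum := by
  have := alphaEq hp s
  omega

end Aux

section Construct

variable {p : ℕ}

lemma sigmaPMul (hp : 1 < p) {x : ℕ} (hx : 0 < x) :
    sigmaDigits p (p * x) = sigmaDigits p x := by
  unfold sigmaDigits
  rw [Nat.digits_def' hp (by positivity), Nat.mul_mod_right,
    Nat.mul_div_cancel_left x (by omega : 0 < p)]
  simp

lemma sigmaPow (hp : 1 < p) (a : ℕ) : sigmaDigits p (p ^ a) = 1 := by
  induction a with
  | zero =>
    simp only [pow_zero, sigmaDigits]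
    rw [Nat.digits_def' hp Nat.one_pos, Nat.mod_eq_of_lt hp, Nat.div_eq_of_lt hp]
    simp
  | succ b ih =>
    rw [pow_succ, mul_comm, sigmaPMul hp (by positivity), ih]

lemma sumMapMul (c : ℕ) (u : Multiset ℕ) : (u.map fun x => c * x).sum = c * u.sum := by
  induction u using Multiset.induction with
  | empty => simp
  | cons a u ih => simp [Multiset.sum_cons, ih, Nat.mul_add]

lemma existsPowMultiset (hp : 1 < p) (n : ℕ) :
    ∃ u : Multiset ℕ, (∀ x ∈ u, ∃ a, x = p ^ a) ∧ u.sum = n ∧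
      Multiset.card u = sigmaDigits p n := by
  induction n using Nat.strong_induction_on with
  | _ n ih =>
    rcases Nat.eq_zero_or_pos n with rfl | hn
    · exact ⟨0, by simp, by simp, by simp [sigmaDigits]⟩
    · obtain ⟨u', hpow', hsum', hcard'⟩ := ih (n / p) (Nat.div_lt_self hn hp)
      refine ⟨Multiset.replicate (n % p) 1 + u'.map (fun x => p * x), ?_, ?_, ?_⟩
      · intro x hx
        rcases Multiset.mem_add.mp hx with h | h
        · exact ⟨0, by simpa using Multiset.eq_of_mem_replicate h⟩
        · obtain ⟨y, hy, rfl⟩ := Multiset.mem_map.mp h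
          obtain ⟨a, rfl⟩ := hpow' y hy
          exact ⟨a + 1, by ring⟩
      · rw [Multiset.sum_add, Multiset.sum_replicate, sumMapMul, hsum', smul_eq_mul,
          mul_one, Nat.mod_add_div]
      · rw [Multiset.card_add, Multiset.card_replicate, Multiset.card_map, hcard']
        unfold sigmaDigits
        rw [Nat.digits_def' hp hn]
        simp

lemma existsPowCard (hp : 1 < p) (n : ℕ) : ∀ U, sigmaDigits p n ≤ U → U ≤ n →
    (p - 1) ∣ (U - sigmaDigits p n) →
    ∃ u : Multiset ℕ, (∀ x ∈ u, ∃ a, x = p ^ a) ∧ u.sum = n ∧ Multiset.card u = U := by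
  intro U
  induction U using Nat.strong_induction_on with
  | _ U ih =>
    intro h1 h2 hd
    rcases eq_or_lt_of_le h1 with heq | hlt
    · obtain ⟨u, hu1, hu2, hu3⟩ := existsPowMultiset hp n
      exact ⟨u, hu1, hu2, heq ▸ hu3⟩
    · have hge : p - 1 ≤ U - sigmaDigits p n := Nat.le_of_dvd (by omega) hd
      have hd' : (p - 1) ∣ (U - (p - 1)) - sigmaDigits p n := by
        have key : U - (p - 1) - sigmaDigits p n = (U - sigmaDigits p n) - (p - 1) := by omega
        rw [key]
        exact Nat.dvd_sub hd dvd_rfl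
      obtain ⟨u, hupow, husum, hucard⟩ := ih (U - (p - 1)) (by omega) (by omega) (by omega) hd'
      have hbig : ∃ x ∈ u, 1 < x := by
        by_contra hcon
        push_neg at hcon
        have := Multiset.sum_le_card_nsmul u 1 hcon
        simp only [smul_eq_mul, mul_one] at this
        omega
      obtain ⟨x, hxu, hx1⟩ := hbig
      obtain ⟨a, rfl⟩ := hupow _ hxu
      have ha : a ≠ 0 := by rintro rfl; simp at hx1
      obtain ⟨b, rfl⟩ : ∃ b, a = b + 1 := ⟨a - 1, by omega⟩
      have he := Multiset.cons_erase hxu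
      have hsume := congrArg Multiset.sum he
      rw [Multiset.sum_cons, husum] at hsume
      have hcarde : Multiset.card (u.erase (p ^ (b + 1))) = U - (p - 1) - 1 := by
        have : Multiset.card (p ^ (b + 1) ::ₘ u.erase (p ^ (b + 1))) = U - (p - 1) := by
          rw [he, hucard]
        rw [Multiset.card_cons] at this
        omega
      refine ⟨Multiset.replicate p (p ^ b) + u.erase (p ^ (b + 1)), ?_, ?_, ?_⟩
      · intro x hx
        rcases Multiset.mem_add.mp hx with h | h
        · exact ⟨b, Multiset.eq_of_mem_replicate h⟩
        · exact hupow _ (Multiset.mem_of_mem_erase h)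
      · rw [Multiset.sum_add, Multiset.sum_replicate, smul_eq_mul]
        have : p * p ^ b = p ^ (b + 1) := by ring
        omega
      · rw [Multiset.card_add, Multiset.card_replicate, hcarde]
        have hc1 : 1 ≤ Multiset.card u := by
          rw [← he, Multiset.card_cons]; omega
        omega

end Construct

lemma listSumMapOne {f : ℕ → ℕ} : ∀ (l : List ℕ), (∀ x ∈ l, f x = 1) →
    (l.map f).sum = l.length
  | [], _ => by simp
  | a :: l, h => by
    simp only [List.map_cons, List.sum_cons, List.length_cons, h a (by simp),
      listSumMapOne l (fun x hx => h x (by simp [hx]))]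
    omega


/-- If `φ_p(λ) > p − 2` and `α_p(λ) > 0` then `λ` is not
`p`-carry-minimal. -/
theorem statement4 (p : ℕ) (hp : p.Prime) (lam : Multiset ℕ)
    (hpos : ∀ x ∈ lam, 0 < x) (hphi : p - 2 < phiSplit p lam)
    (halpha : 0 < alphaCarry p lam) :
    ∃ lam' : Multiset ℕ, (∀ x ∈ lam', 0 < x) ∧ lam'.sum = lam.sum ∧
      Multiset.card lam' = Multiset.card lam ∧
      alphaCarry p lam' < alphaCarry p lam := by
  have hp1 : 1 < p := hp.one_lt
  set n := lam.sum with hn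
  set k := Multiset.card lam with hk
  set S := (lam.map (sigmaDigits p)).sum with hS
  have hphi' : p - 2 < S - k := by
    rw [hS, hk]
    exact hphi
  have e2 : (p - 1) * alphaCarry p lam + sigmaDigits p n = S := by
    rw [hn, hS]
    exact alphaEq hp lam
  have hnk : k ≤ n := by
    rw [hn, hk]
    have h := Multiset.card_nsmul_le_sum (s := lam) (fun x hx => hpos x hx)
    simpa using h
  have hk1 : 1 ≤ k := by
    rcases Nat.eq_zero_or_pos k with h0 | h
    · exfalso
      have hl0 : lam = 0 := Multiset.card_eq_zero.mp (by rw [← hk]; exact h0)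
      have hS0 : S = 0 := by rw [hS, hl0]; simp
      have hmul : 0 < (p - 1) * alphaCarry p lam := Nat.mul_pos (by omega) halpha
      omega
    · exact h
  clear_value n k S
  clear hphi
  have hSbig : sigmaDigits p n + (p - 1) ≤ S := by
    have : p - 1 ≤ (p - 1) * alphaCarry p lam := Nat.le_mul_of_pos_right _ halpha
    omega
  have hkS : k + (p - 1) ≤ S := by omega
  -- choose the target cardinality U
  obtain ⟨U, hUσ, hUn, hUdvd, hUk, hUS⟩ :
      ∃ U, sigmaDigits p n ≤ U ∧ U ≤ n ∧ (p - 1) ∣ (U - sigmaDigits p n)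
        ∧ k ≤ U ∧ U < S := by
    by_cases hcase : k ≤ sigmaDigits p n
    · exact ⟨sigmaDigits p n, le_rfl, Nat.digit_sum_le p n, by simp, hcase, by omega⟩
    · have hmod : (n - k) % (p - 1) < p - 1 := Nat.mod_lt _ (by omega)
      have hmeq : (k + (n - k) % (p - 1)) ≡ sigmaDigits p n [MOD p - 1] := by
        have h1 : (n - k) % (p - 1) ≡ (n - k) [MOD p - 1] := Nat.mod_modEq _ _
        have h2 : k + (n - k) % (p - 1) ≡ k + (n - k) [MOD p - 1] :=
          Nat.ModEq.add_left k h1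
        have h3 : k + (n - k) = n := by omega
        have h4 : n ≡ sigmaDigits p n [MOD p - 1] := by
          rcases eq_or_lt_of_le (show 2 ≤ p from hp1) with h | h
          · have hone : p - 1 = 1 := by omega
            rw [hone]
            exact Nat.modEq_one
          · refine Nat.modEq_digits_sum (p - 1) p ?_ n
            obtain ⟨q, hq⟩ : ∃ q, p = q + 1 := ⟨p - 1, by omega⟩
            subst hq
            simp only [Nat.add_sub_cancel]
            rw [Nat.add_mod_left]
            exact Nat.mod_eq_of_lt (by omega)
        rw [h3] at h2
        exact h2.trans h4
      refine ⟨k + (n - k) % (p - 1), by omega,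
        by have := Nat.mod_le (n - k) (p - 1); omega, ?_, by omega, by omega⟩
      exact (Nat.modEq_iff_dvd' (by omega)).mp hmeq.symm
  obtain ⟨u, hupow, husum, hucard⟩ := existsPowCard hp1 n U hUσ hUn hUdvd
  set l := u.toList with hl
  have hlen : l.length = U := by rw [hl, Multiset.length_toList, hucard]
  have hlmem : ∀ x ∈ l, ∃ a, x = p ^ a := fun x hx =>
    hupow x (Multiset.mem_toList.mp hx)
  have hlsum : l.sum = n := by rw [hl, Multiset.sum_toList, husum]
  set t := l.take (k - 1) with ht
  set d := l.drop (k - 1) with hd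
  have htd : t ++ d = l := List.take_append_drop _ _
  have hlent : t.length = k - 1 := by rw [ht, List.length_take, hlen]; omega
  have hlend : d.length = U - (k - 1) := by rw [hd, List.length_drop, hlen]
  have hdne : d ≠ [] := by
    intro h
    rw [h] at hlend
    simp at hlend
    omega
  have hpow_pos : ∀ x ∈ l, 0 < x := by
    intro x hx
    obtain ⟨a, rfl⟩ := hlmem x hx
    exact pow_pos (by omega) a
  refine ⟨d.sum ::ₘ (↑t : Multiset ℕ), ?_, ?_, ?_, ?_⟩
  · intro x hx
    rcases Multiset.mem_cons.mp hx with rfl | hxt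
    · exact List.sum_pos d (fun x hx => hpow_pos x (List.drop_subset _ _ hx)) hdne
    · exact hpow_pos x (List.take_subset _ _ (Multiset.mem_coe.mp hxt))
  · rw [Multiset.sum_cons, Multiset.sum_coe]
    have := congrArg List.sum htd
    rw [List.sum_append] at this
    omega
  · rw [Multiset.card_cons, Multiset.coe_card, hlent]
    omega

  · -- the α comparison
    have hsum' : (d.sum ::ₘ (↑t : Multiset ℕ)).sum = n := by
      rw [Multiset.sum_cons, Multiset.sum_coe]
      have := congrArg List.sum htd
      rw [List.sum_append] at this
      omega
    have e1 := alphaEq hp (d.sum ::ₘ (↑t : Multiset ℕ))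
    rw [hsum'] at e1
    have hσd : sigmaDigits p d.sum ≤ d.length := by
      have h1 : sigmaDigits p ((↑d : Multiset ℕ).sum)
          ≤ ((↑d : Multiset ℕ).map (sigmaDigits p)).sum := sigmaSumLe hp _
      rw [Multiset.sum_coe, Multiset.map_coe, Multiset.sum_coe] at h1
      rw [listSumMapOne d (fun x hx => by
        obtain ⟨a, rfl⟩ := hlmem x (List.drop_subset _ _ hx)
        exact sigmaPow hp1 a)] at h1
      exact h1
    have hσt : ((↑t : Multiset ℕ).map (sigmaDigits p)).sum = t.length := by
      rw [Multiset.map_coe, Multiset.sum_coe]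
      exact listSumMapOne t (fun x hx => by
        obtain ⟨a, rfl⟩ := hlmem x (List.take_subset _ _ hx)
        exact sigmaPow hp1 a)
    have hS' : ((d.sum ::ₘ (↑t : Multiset ℕ)).map (sigmaDigits p)).sum ≤ U := by
      rw [Multiset.map_cons, Multiset.sum_cons, hσt]
      have : t.length + d.length = U := by
        have := congrArg List.length htd
        rw [List.length_append] at this
        omega
      omega
    have hmul : (p - 1) * alphaCarry p (d.sum ::ₘ (↑t : Multiset ℕ))
        < (p - 1) * alphaCarry p lam := by omega
    exact Nat.lt_of_mul_lt_mul_left hmul
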